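/- Let V be a finite-dimensional real inner product space, X ⊂ V \ {0} finite, a ∈ V_C, and v ∈ V. For φ ∈ M(a,X) (germ of meromorphic function with singularities along X-hyperplanes through a), the directional derivative ∂_v φ also belongs to M(a,X); moreover, the transpose ∂_v^* of ∂_v maps M(a,X)*_laur into itself, i.e. for every X-Laurent functional L at a, the functional φ ↦ L(∂_v φ) is again an X-Laurent functional at a. -/

import Mathlib

namespace LaurentFunctionals

variable {n : ℕ}

/-- The complex bilinear pairing `⟨ξ, z⟩` of `ξ ∈ ℝⁿ` with `z ∈ ℂⁿ`. -/
noncomputable def cpair (ξ : Fin n → ℝ) (z : Fin n → ℂ) : ℂ := ∑ i, (ξ i : ℂ) * z i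

/-- The germ filter at `a`: neighborhoods of `a` intersected with the complement of the
union of the `X`-hyperplanes through `a`.  Germs of meromorphic functions at `a` with
singular locus along these hyperplanes are germs of functions along this filter. -/
noncomputable def germFilter (X : Finset (Fin n → ℝ)) (a : Fin n → ℂ) :
    Filter (Fin n → ℂ) :=
  nhds a ⊓ Filter.principal {z | ∀ ξ ∈ X, cpair ξ (z - a) ≠ 0}

/-- The polynomial `π_{a,d}(z) = ∏_{ξ ∈ X} ⟨ξ, z − a⟩^{d ξ}`. -/
noncomputable def piPoly (X : Finset (Fin n → ℝ)) (a : Fin n → ℂ)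
    (d : (Fin n → ℝ) → ℕ) : (Fin n → ℂ) → ℂ :=
  fun z => ∏ ξ ∈ X, cpair ξ (z - a) ^ d ξ

/-- The meromorphic function `π_{a,d}⁻¹ · g`. -/
noncomputable def mero (X : Finset (Fin n → ℝ)) (a : Fin n → ℂ)
    (d : (Fin n → ℝ) → ℕ) (g : (Fin n → ℂ) → ℂ) : (Fin n → ℂ) → ℂ :=
  fun z => (piPoly X a d z)⁻¹ * g z

/-- `O_a`: germs at `a` of holomorphic functions. -/
def Oa (X : Finset (Fin n → ℝ)) (a : Fin n → ℂ) :
    Set (Filter.Germ (germFilter X a) ℂ) :=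
  {φ | ∃ g : (Fin n → ℂ) → ℂ, AnalyticAt ℂ g a ∧
    φ = (g : Filter.Germ (germFilter X a) ℂ)}

/-- `M(a, X)`: germs at `a` of meromorphic functions whose singular locus at `a` lies in
the union of the `X`-hyperplanes through `a`; equivalently `∪_d π_{a,d}⁻¹ O_a`. -/
def Ma (X : Finset (Fin n → ℝ)) (a : Fin n → ℂ) :
    Set (Filter.Germ (germFilter X a) ℂ) :=
  {φ | ∃ (d : (Fin n → ℝ) → ℕ) (g : (Fin n → ℂ) → ℂ), AnalyticAt ℂ g a ∧
    φ = (mero X a d g : Filter.Germ (germFilter X a) ℂ)}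

/-- The directional derivative operator `∂_v`. -/
noncomputable def dirD (v : Fin n → ℂ) (g : (Fin n → ℂ) → ℂ) : (Fin n → ℂ) → ℂ :=
  fun z => fderiv ℂ g z v

/-- The composition of directional derivatives along the word `w`. -/
noncomputable def applyWord (w : List (Fin n → ℂ)) (g : (Fin n → ℂ) → ℂ) :
    (Fin n → ℂ) → ℂ :=
  w.foldr dirD g

/-- The action of an element `u ∈ S(V)` — a complex linear combination of words of
directional derivatives — on a function. -/
noncomputable def applyOp (u : List (ℂ × List (Fin n → ℂ))) (g : (Fin n → ℂ) → ℂ)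
    (z : Fin n → ℂ) : ℂ :=
  (u.map fun p => p.1 * applyWord p.2 g z).sum

/-- `L` is an `X`-Laurent functional at `a`: a linear functional on `M(a, X)` such that
for every `d : X → ℕ` there is `u_d ∈ S(V)` with `L φ = u_d(π_{a,d} φ)(a)` for all
`φ ∈ π_{a,d}⁻¹ O_a`. -/
def IsLaurentAt (X : Finset (Fin n → ℝ)) (a : Fin n → ℂ)
    (L : Filter.Germ (germFilter X a) ℂ → ℂ) : Prop :=
  (∀ φ ψ : Filter.Germ (germFilter X a) ℂ, φ ∈ Ma X a → ψ ∈ Ma X a →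
    L (φ + ψ) = L φ + L ψ) ∧
  (∀ (z : ℂ) (φ : Filter.Germ (germFilter X a) ℂ), φ ∈ Ma X a →
    L (z • φ) = z * L φ) ∧
  (∀ d : (Fin n → ℝ) → ℕ, ∃ u : List (ℂ × List (Fin n → ℂ)),
    ∀ g : (Fin n → ℂ) → ℂ, AnalyticAt ℂ g a →
      L (mero X a d g : Filter.Germ (germFilter X a) ℂ) = applyOp u g a)


/-- The complexification of the real direction vector `v`. -/
noncomputable def cOf (v : Fin n → ℝ) : Fin n → ℂ := fun i => (v i : ℂ)

/-! ### Auxiliary lemmas -/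

section Aux

open Filter

lemma analyticAt_cpair (ξ : Fin n → ℝ) (a z : Fin n → ℂ) :
    AnalyticAt ℂ (fun w => cpair ξ (w - a)) z := by
  have h : (fun w : Fin n → ℂ => cpair ξ (w - a)) =
      fun w => ∑ i, (ξ i : ℂ) * (w i - a i) := by
    funext w; simp [cpair]
  rw [h]
  exact Finset.analyticAt_fun_sum _ fun i _ =>
    analyticAt_const.mul
      (((ContinuousLinearMap.proj i : (Fin n → ℂ) →L[ℂ] ℂ).analyticAt z).sub analyticAt_const)

lemma analyticAt_piPoly (X : Finset (Fin n → ℝ)) (a : Fin n → ℂ)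
    (d : (Fin n → ℝ) → ℕ) (z : Fin n → ℂ) : AnalyticAt ℂ (piPoly X a d) z := by
  unfold piPoly
  exact Finset.analyticAt_fun_prod _ fun ξ _ => (analyticAt_cpair ξ a z).pow _

lemma piPoly_ne_zero {X : Finset (Fin n → ℝ)} {a : Fin n → ℂ} {d : (Fin n → ℝ) → ℕ}
    {z : Fin n → ℂ} (hz : ∀ ξ ∈ X, cpair ξ (z - a) ≠ 0) : piPoly X a d z ≠ 0 :=
  Finset.prod_ne_zero_iff.2 fun ξ hξ => pow_ne_zero _ (hz ξ hξ)

lemma piPoly_two_mul (X : Finset (Fin n → ℝ)) (a : Fin n → ℂ) (d : (Fin n → ℝ) → ℕ)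
    (z : Fin n → ℂ) : piPoly X a (fun ξ => 2 * d ξ) z = piPoly X a d z ^ 2 := by
  unfold piPoly
  rw [← Finset.prod_pow]
  exact Finset.prod_congr rfl fun ξ _ => by rw [← pow_mul, mul_comm]

lemma piPoly_add (X : Finset (Fin n → ℝ)) (a : Fin n → ℂ) (d e : (Fin n → ℝ) → ℕ)
    (z : Fin n → ℂ) :
    piPoly X a (fun ξ => d ξ + e ξ) z = piPoly X a d z * piPoly X a e z := by
  unfold piPoly
  rw [← Finset.prod_mul_distrib]
  exact Finset.prod_congr rfl fun ξ _ => pow_add _ _ _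

lemma isOpen_Sset (X : Finset (Fin n → ℝ)) (a : Fin n → ℂ) :
    IsOpen {z : Fin n → ℂ | ∀ ξ ∈ X, cpair ξ (z - a) ≠ 0} := by
  have h : {z : Fin n → ℂ | ∀ ξ ∈ X, cpair ξ (z - a) ≠ 0}
      = ⋂ ξ ∈ X, {z | cpair ξ (z - a) ≠ 0} := by
    ext z; simp
  rw [h]
  refine isOpen_biInter_finset fun ξ _ => ?_
  have hc : Continuous fun z : Fin n → ℂ => cpair ξ (z - a) :=
    continuous_iff_continuousAt.2 fun z => (analyticAt_cpair ξ a z).continuousAt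
  exact isOpen_ne.preimage hc

lemma eventually_Sset (X : Finset (Fin n → ℝ)) (a : Fin n → ℂ) :
    ∀ᶠ z in germFilter X a, ∀ ξ ∈ X, cpair ξ (z - a) ≠ 0 := by
  have : {z : Fin n → ℂ | ∀ ξ ∈ X, cpair ξ (z - a) ≠ 0} ∈ germFilter X a :=
    Filter.mem_inf_of_right (Filter.mem_principal_self _)
  exact this

lemma nhds_eventually_germ {X : Finset (Fin n → ℝ)} {a : Fin n → ℂ}
    {p : (Fin n → ℂ) → Prop} (h : ∀ᶠ z in nhds a, p z) : ∀ᶠ z in germFilter X a, p z :=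
  h.filter_mono inf_le_left

lemma dirD_congr_germ (X : Finset (Fin n → ℝ)) (a : Fin n → ℂ) (v : Fin n → ℂ)
    {f g : (Fin n → ℂ) → ℂ} (h : f =ᶠ[germFilter X a] g) :
    dirD v f =ᶠ[germFilter X a] dirD v g := by
  set S := {z : Fin n → ℂ | ∀ ξ ∈ X, cpair ξ (z - a) ≠ 0} with hSdef
  have hmem : ∀ᶠ z in nhds a, z ∈ S → f z = g z := by
    have h' := h
    unfold germFilter at h'
    rwa [EventuallyEq, eventually_inf_principal] at h'
  obtain ⟨U, hUsub, hUopen, haU⟩ := mem_nhds_iff.1 hmem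
  have hO : IsOpen (U ∩ S) := hUopen.inter (isOpen_Sset X a)
  unfold germFilter
  rw [EventuallyEq, eventually_inf_principal]
  filter_upwards [hUopen.mem_nhds haU] with z hzU hzS
  have hfg : f =ᶠ[nhds z] g := by
    filter_upwards [hO.mem_nhds ⟨hzU, hzS⟩] with w hw
    exact hUsub hw.1 hw.2
  unfold dirD
  rw [hfg.fderiv_eq]

lemma analyticAt_dirD {f : (Fin n → ℂ) → ℂ} {v z : Fin n → ℂ}
    (hf : AnalyticAt ℂ f z) : AnalyticAt ℂ (dirD v f) z := by
  have h1 : AnalyticAt ℂ (fderiv ℂ f) z := hf.fderiv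
  have h2 := ((ContinuousLinearMap.apply ℂ ℂ v).analyticAt (fderiv ℂ f z)).comp h1
  have h3 : (⇑(ContinuousLinearMap.apply ℂ ℂ v) ∘ fderiv ℂ f) = dirD v f := by
    funext w; simp [dirD, Function.comp]
  rwa [h3] at h2

lemma dirD_congr_nhds {f g : (Fin n → ℂ) → ℂ} {v a : Fin n → ℂ}
    (h : f =ᶠ[nhds a] g) : dirD v f =ᶠ[nhds a] dirD v g := by
  filter_upwards [h.fderiv (𝕜 := ℂ)] with z hz
  unfold dirD; rw [hz]

lemma dirD_add_nhds {f g : (Fin n → ℂ) → ℂ} {v a : Fin n → ℂ}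
    (hf : AnalyticAt ℂ f a) (hg : AnalyticAt ℂ g a) :
    dirD v (fun z => f z + g z) =ᶠ[nhds a] fun z => dirD v f z + dirD v g z := by
  filter_upwards [hf.eventually_analyticAt, hg.eventually_analyticAt] with z hfz hgz
  unfold dirD
  rw [fderiv_fun_add hfz.differentiableAt hgz.differentiableAt]
  simp

lemma dirD_mul_nhds {p f : (Fin n → ℂ) → ℂ} {v a : Fin n → ℂ}
    (hp : AnalyticAt ℂ p a) (hf : AnalyticAt ℂ f a) :
    dirD v (fun z => p z * f z) =ᶠ[nhds a]
      fun z => dirD v p z * f z + p z * dirD v f z := by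
  filter_upwards [hp.eventually_analyticAt, hf.eventually_analyticAt] with z hpz hfz
  unfold dirD
  rw [fderiv_fun_mul hpz.differentiableAt hfz.differentiableAt]
  simp [smul_eq_mul]
  ring

lemma dirD_neg (v : Fin n → ℂ) (f : (Fin n → ℂ) → ℂ) :
    dirD v (fun z => -f z) = fun z => -dirD v f z := by
  funext z
  unfold dirD
  rw [fderiv_fun_neg]
  simp

lemma applyWord_cons (v : Fin n → ℂ) (w : List (Fin n → ℂ)) (g : (Fin n → ℂ) → ℂ) :
    applyWord (v :: w) g = dirD v (applyWord w g) := rfl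

lemma applyWord_nil (g : (Fin n → ℂ) → ℂ) : applyWord ([] : List (Fin n → ℂ)) g = g := rfl

lemma analyticAt_applyWord (w : List (Fin n → ℂ)) {f : (Fin n → ℂ) → ℂ} {a : Fin n → ℂ}
    (hf : AnalyticAt ℂ f a) : AnalyticAt ℂ (applyWord w f) a := by
  induction w with
  | nil => exact hf
  | cons v w ih => exact analyticAt_dirD ih

lemma applyWord_congr_nhds (w : List (Fin n → ℂ)) {f g : (Fin n → ℂ) → ℂ} {a : Fin n → ℂ}
    (h : f =ᶠ[nhds a] g) : applyWord w f =ᶠ[nhds a] applyWord w g := by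
  induction w with
  | nil => exact h
  | cons v w ih => exact dirD_congr_nhds ih

lemma applyWord_add (w : List (Fin n → ℂ)) {f g : (Fin n → ℂ) → ℂ} {a : Fin n → ℂ}
    (hf : AnalyticAt ℂ f a) (hg : AnalyticAt ℂ g a) :
    applyWord w (fun z => f z + g z) =ᶠ[nhds a]
      fun z => applyWord w f z + applyWord w g z := by
  induction w with
  | nil => exact EventuallyEq.rfl
  | cons v w ih =>
    rw [applyWord_cons, applyWord_cons, applyWord_cons]
    calc dirD v (applyWord w fun z => f z + g z)
        =ᶠ[nhds a] dirD v (fun z => applyWord w f z + applyWord w g z) :=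
          dirD_congr_nhds ih
      _ =ᶠ[nhds a] fun z => dirD v (applyWord w f) z + dirD v (applyWord w g) z :=
          dirD_add_nhds (analyticAt_applyWord w hf) (analyticAt_applyWord w hg)

lemma applyWord_neg (w : List (Fin n → ℂ)) (f : (Fin n → ℂ) → ℂ) :
    applyWord w (fun z => -f z) = fun z => -applyWord w f z := by
  induction w with
  | nil => rfl
  | cons v w ih =>
    rw [applyWord_cons, applyWord_cons, ih, dirD_neg]

lemma applyWord_append (w : List (Fin n → ℂ)) (v : Fin n → ℂ) (f : (Fin n → ℂ) → ℂ) :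
    applyWord (w ++ [v]) f = applyWord w (dirD v f) := by
  unfold applyWord
  rw [List.foldr_append]
  rfl

/-- Evaluation of a list of (analytic coefficient, word) pairs on `f`. -/
noncomputable def opFun (l : List (((Fin n → ℂ) → ℂ) × List (Fin n → ℂ)))
    (f : (Fin n → ℂ) → ℂ) (z : Fin n → ℂ) : ℂ :=
  (l.map fun q => q.1 z * applyWord q.2 f z).sum

lemma analyticAt_opFun (l : List (((Fin n → ℂ) → ℂ) × List (Fin n → ℂ)))
    {f : (Fin n → ℂ) → ℂ} {a : Fin n → ℂ}
    (hl : ∀ q ∈ l, AnalyticAt ℂ q.1 a) (hf : AnalyticAt ℂ f a) :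
    AnalyticAt ℂ (opFun l f) a := by
  induction l with
  | nil =>
    rw [show opFun [] f = fun _ => (0 : ℂ) from by funext z; simp [opFun]]
    exact analyticAt_const
  | cons q l ih =>
    have h1 : AnalyticAt ℂ (fun z => q.1 z * applyWord q.2 f z) a :=
      (hl q List.mem_cons_self).mul (analyticAt_applyWord q.2 hf)
    have h2 : AnalyticAt ℂ (opFun l f) a := ih fun p hp => hl p (List.mem_cons_of_mem _ hp)
    have h3 : opFun (q :: l) f = fun z => q.1 z * applyWord q.2 f z + opFun l f z := by
      funext z; simp [opFun]
    rw [h3]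
    exact h1.add h2

/-- One derivative step on an `opFun` decomposition, via the Leibniz rule. -/
noncomputable def stepList (v : Fin n → ℂ)
    (l : List (((Fin n → ℂ) → ℂ) × List (Fin n → ℂ))) :
    List (((Fin n → ℂ) → ℂ) × List (Fin n → ℂ)) :=
  l.flatMap fun q => [(dirD v q.1, q.2), (q.1, v :: q.2)]

lemma stepList_analytic {v : Fin n → ℂ} {a : Fin n → ℂ}
    {l : List (((Fin n → ℂ) → ℂ) × List (Fin n → ℂ))}
    (hl : ∀ q ∈ l, AnalyticAt ℂ q.1 a) :
    ∀ q ∈ stepList v l, AnalyticAt ℂ q.1 a := by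
  intro q hq
  rw [stepList, List.mem_flatMap] at hq
  obtain ⟨p, hp, hq⟩ := hq
  simp only [List.mem_cons, List.mem_singleton, List.not_mem_nil, or_false] at hq
  rcases hq with h | h
  · rw [h]; exact analyticAt_dirD (hl p hp)
  · rw [h]; exact hl p hp

lemma dirD_opFun (v : Fin n → ℂ) {a : Fin n → ℂ}
    (l : List (((Fin n → ℂ) → ℂ) × List (Fin n → ℂ)))
    {f : (Fin n → ℂ) → ℂ}
    (hl : ∀ q ∈ l, AnalyticAt ℂ q.1 a) (hf : AnalyticAt ℂ f a) :
    dirD v (opFun l f) =ᶠ[nhds a] opFun (stepList v l) f := by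
  induction l with
  | nil =>
    have h0 : opFun ([] : List (((Fin n → ℂ) → ℂ) × List (Fin n → ℂ))) f
        = fun _ => (0 : ℂ) := by funext z; simp [opFun]
    have h1 : stepList v ([] : List (((Fin n → ℂ) → ℂ) × List (Fin n → ℂ))) = [] := rfl
    rw [h0, h1, h0]
    have : dirD v (fun _ : Fin n → ℂ => (0 : ℂ)) = fun _ => (0 : ℂ) := by
      funext z; unfold dirD; rw [fderiv_fun_const]; simp
    rw [this]
  | cons q l ih =>
    have hq1 : AnalyticAt ℂ q.1 a := hl q List.mem_cons_self
    have hl' : ∀ p ∈ l, AnalyticAt ℂ p.1 a := fun p hp => hl p (List.mem_cons_of_mem _ hp)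
    have hAw : AnalyticAt ℂ (applyWord q.2 f) a := analyticAt_applyWord q.2 hf
    have hsplit : opFun (q :: l) f
        = fun z => q.1 z * applyWord q.2 f z + opFun l f z := by
      funext z; simp [opFun]
    have hstep : opFun (stepList v (q :: l)) f
        = fun z => (dirD v q.1 z * applyWord q.2 f z + q.1 z * dirD v (applyWord q.2 f) z)
            + opFun (stepList v l) f z := by
      funext z
      simp [stepList, opFun, applyWord_cons, add_assoc]
    rw [hsplit, hstep]
    calc dirD v (fun z => q.1 z * applyWord q.2 f z + opFun l f z)
        =ᶠ[nhds a] fun z => dirD v (fun w => q.1 w * applyWord q.2 f w) z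
            + dirD v (opFun l f) z :=
          dirD_add_nhds (hq1.mul hAw) (analyticAt_opFun l hl' hf)
      _ =ᶠ[nhds a] fun z => (dirD v q.1 z * applyWord q.2 f z
            + q.1 z * dirD v (applyWord q.2 f) z) + opFun (stepList v l) f z := by
          have h1 := dirD_mul_nhds (v := v) hq1 hAw
          have h2 := ih hl'
          filter_upwards [h1, h2] with z hz1 hz2
          rw [hz1, hz2]

/-- The Leibniz decomposition: applying a word of derivatives to `p * f` can be
rewritten as an `opFun` decomposition acting on `f`. -/
lemma leibniz_word (a : Fin n → ℂ) (w : List (Fin n → ℂ)) (p : (Fin n → ℂ) → ℂ)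
    (hp : AnalyticAt ℂ p a) :
    ∃ l : List (((Fin n → ℂ) → ℂ) × List (Fin n → ℂ)),
      (∀ q ∈ l, AnalyticAt ℂ q.1 a) ∧
      ∀ f : (Fin n → ℂ) → ℂ, AnalyticAt ℂ f a →
        applyWord w (fun z => p z * f z) =ᶠ[nhds a] opFun l f := by
  induction w with
  | nil =>
    refine ⟨[(p, [])], ?_, ?_⟩
    · intro q hq
      simp only [List.mem_singleton] at hq
      rw [hq]; exact hp
    · intro f hf
      apply Filter.EventuallyEq.of_eq
      funext z
      simp [opFun, applyWord_nil]
  | cons v w ih =>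
    obtain ⟨l, hl, hev⟩ := ih
    refine ⟨stepList v l, stepList_analytic hl, ?_⟩
    intro f hf
    rw [applyWord_cons]
    calc dirD v (applyWord w fun z => p z * f z)
        =ᶠ[nhds a] dirD v (opFun l f) := dirD_congr_nhds (hev f hf)
      _ =ᶠ[nhds a] opFun (stepList v l) f := dirD_opFun v l hl hf

lemma mero_analyticAt {X : Finset (Fin n → ℝ)} {a : Fin n → ℂ} {d : (Fin n → ℝ) → ℕ}
    {g : (Fin n → ℂ) → ℂ} {z : Fin n → ℂ}
    (hz : ∀ ξ ∈ X, cpair ξ (z - a) ≠ 0) (hg : AnalyticAt ℂ g z) :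
    AnalyticAt ℂ (mero X a d g) z :=
  ((analyticAt_piPoly X a d z).inv (piPoly_ne_zero hz)).mul hg

/-- The key computation: `∂_v (π_d⁻¹ g) = π_{2d}⁻¹ (π_d ∂_v g − (∂_v π_d) g)`. -/
lemma dirD_mero (X : Finset (Fin n → ℝ)) (a : Fin n → ℂ) (v : Fin n → ℂ)
    (d : (Fin n → ℝ) → ℕ) {g : (Fin n → ℂ) → ℂ} (hg : AnalyticAt ℂ g a) :
    dirD v (mero X a d g) =ᶠ[germFilter X a]
      mero X a (fun ξ => 2 * d ξ)
        (fun z => piPoly X a d z * dirD v g z - dirD v (piPoly X a d) z * g z) := by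
  filter_upwards [eventually_Sset X a, nhds_eventually_germ hg.eventually_analyticAt]
    with z hzS hgz
  have hπ : AnalyticAt ℂ (piPoly X a d) z := analyticAt_piPoly X a d z
  have hπne : piPoly X a d z ≠ 0 := piPoly_ne_zero hzS
  -- derivative of the inverse of piPoly
  have hinv : DifferentiableAt ℂ (fun w => (piPoly X a d w)⁻¹) z :=
    hπ.differentiableAt.inv hπne
  have hmul : fderiv ℂ (fun w => (piPoly X a d w)⁻¹ * g w) z
      = (piPoly X a d z)⁻¹ • fderiv ℂ g z
        + g z • fderiv ℂ (fun w => (piPoly X a d w)⁻¹) z := by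
    have := fderiv_mul (𝕜 := ℂ) hinv hgz.differentiableAt
    exact this
  have hinvd : fderiv ℂ (fun w => (piPoly X a d w)⁻¹) z v
      = -((piPoly X a d z ^ 2)⁻¹) * fderiv ℂ (piPoly X a d) z v := by
    have hcomp : fderiv ℂ (Inv.inv ∘ piPoly X a d) z
        = (fderiv ℂ (Inv.inv : ℂ → ℂ) (piPoly X a d z)).comp (fderiv ℂ (piPoly X a d) z) :=
      fderiv_comp z (differentiableAt_inv hπne) hπ.differentiableAt
    have : (fun w => (piPoly X a d w)⁻¹) = Inv.inv ∘ piPoly X a d := rfl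
    rw [this, hcomp]
    rw [fderiv_inv]
    simp [smul_eq_mul]
    ring
  unfold mero dirD
  beta_reduce
  rw [hmul, piPoly_two_mul]
  simp only [ContinuousLinearMap.add_apply, ContinuousLinearMap.smul_apply, smul_eq_mul]
  rw [hinvd]
  field_simp
  ring

lemma mem_Ma_dirD {X : Finset (Fin n → ℝ)} {a : Fin n → ℂ} {v : Fin n → ℂ}
    {f : (Fin n → ℂ) → ℂ}
    (hf : (f : Filter.Germ (germFilter X a) ℂ) ∈ Ma X a) :
    (dirD v f : Filter.Germ (germFilter X a) ℂ) ∈ Ma X a := by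
  obtain ⟨d, g, hg, hfg⟩ := hf
  rw [Filter.Germ.coe_eq] at hfg
  refine ⟨fun ξ => 2 * d ξ,
    fun z => piPoly X a d z * dirD v g z - dirD v (piPoly X a d) z * g z, ?_, ?_⟩
  · exact ((analyticAt_piPoly X a d a).mul (analyticAt_dirD hg)).sub
      ((analyticAt_dirD (analyticAt_piPoly X a d a)).mul hg)
  · rw [Filter.Germ.coe_eq]
    exact (dirD_congr_germ X a v hfg).trans (dirD_mero X a v d hg)

lemma Ma_add {X : Finset (Fin n → ℝ)} {a : Fin n → ℂ}
    {φ ψ : Filter.Germ (germFilter X a) ℂ} (hφ : φ ∈ Ma X a) (hψ : ψ ∈ Ma X a) :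
    φ + ψ ∈ Ma X a := by
  obtain ⟨d, g, hg, rfl⟩ := hφ
  obtain ⟨e, h, hh, rfl⟩ := hψ
  refine ⟨fun ξ => d ξ + e ξ, fun z => piPoly X a e z * g z + piPoly X a d z * h z,
    ((analyticAt_piPoly X a e a).mul hg).add ((analyticAt_piPoly X a d a).mul hh), ?_⟩
  rw [← Filter.Germ.coe_add, Filter.Germ.coe_eq]
  filter_upwards [eventually_Sset X a] with z hz
  have h1 : piPoly X a d z ≠ 0 := piPoly_ne_zero hz
  have h2 : piPoly X a e z ≠ 0 := piPoly_ne_zero hz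
  show mero X a d g z + mero X a e h z = _
  unfold mero
  rw [piPoly_add]
  field_simp

lemma Ma_smul {X : Finset (Fin n → ℝ)} {a : Fin n → ℂ} (c : ℂ)
    {φ : Filter.Germ (germFilter X a) ℂ} (hφ : φ ∈ Ma X a) : c • φ ∈ Ma X a := by
  obtain ⟨d, g, hg, rfl⟩ := hφ
  refine ⟨d, fun z => c * g z, analyticAt_const.mul hg, ?_⟩
  rw [← Filter.Germ.coe_smul, Filter.Germ.coe_eq]
  apply Filter.EventuallyEq.of_eq
  funext z
  show c • mero X a d g z = _
  unfold mero
  simp [smul_eq_mul]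
  ring

attribute [local instance] Classical.propDecidable

/-- The derivative map on germs, defined by choice of a representative in `Ma`. -/
noncomputable def Dmap (X : Finset (Fin n → ℝ)) (a : Fin n → ℂ) (v : Fin n → ℂ)
    (φ : Filter.Germ (germFilter X a) ℂ) : Filter.Germ (germFilter X a) ℂ :=
  if h : φ ∈ Ma X a then
    ((dirD v (mero X a (Exists.choose h) (Exists.choose (Exists.choose_spec h))) :
      (Fin n → ℂ) → ℂ) : Filter.Germ (germFilter X a) ℂ)
  else 0

lemma Dmap_spec {X : Finset (Fin n → ℝ)} {a v : Fin n → ℂ} {f : (Fin n → ℂ) → ℂ}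
    (hf : (f : Filter.Germ (germFilter X a) ℂ) ∈ Ma X a) :
    Dmap X a v (f : Filter.Germ (germFilter X a) ℂ)
      = (dirD v f : Filter.Germ (germFilter X a) ℂ) := by
  unfold Dmap
  rw [dif_pos hf]

  have he := (Exists.choose_spec (Exists.choose_spec hf)).2
  rw [Filter.Germ.coe_eq] at he
  rw [Filter.Germ.coe_eq]
  exact dirD_congr_germ X a v he.symm

lemma dirD_coe_add {X : Finset (Fin n → ℝ)} {a v : Fin n → ℂ} {f g : (Fin n → ℂ) → ℂ}
    (hf : (f : Filter.Germ (germFilter X a) ℂ) ∈ Ma X a)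
    (hg : (g : Filter.Germ (germFilter X a) ℂ) ∈ Ma X a) :
    ((dirD v (f + g) : (Fin n → ℂ) → ℂ) : Filter.Germ (germFilter X a) ℂ)
      = (dirD v f : Filter.Germ (germFilter X a) ℂ)
        + (dirD v g : Filter.Germ (germFilter X a) ℂ) := by
  obtain ⟨d₁, g₁, hg₁, he₁⟩ := hf
  obtain ⟨d₂, g₂, hg₂, he₂⟩ := hg
  rw [Filter.Germ.coe_eq] at he₁ he₂
  rw [← Filter.Germ.coe_add, Filter.Germ.coe_eq]
  have hsum : (f + g) =ᶠ[germFilter X a]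
      fun z => mero X a d₁ g₁ z + mero X a d₂ g₂ z := by
    filter_upwards [he₁, he₂] with z h1 h2
    simp [Pi.add_apply, h1, h2]
  have h2 : dirD v (fun z => mero X a d₁ g₁ z + mero X a d₂ g₂ z)
      =ᶠ[germFilter X a]
        fun z => dirD v (mero X a d₁ g₁) z + dirD v (mero X a d₂ g₂) z := by
    filter_upwards [eventually_Sset X a,
      nhds_eventually_germ hg₁.eventually_analyticAt,
      nhds_eventually_germ hg₂.eventually_analyticAt] with z hz ha1 ha2
    unfold dirD
    rw [fderiv_fun_add (mero_analyticAt hz ha1).differentiableAt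
      (mero_analyticAt hz ha2).differentiableAt]
    simp
  have h3 : (fun z => dirD v (mero X a d₁ g₁) z + dirD v (mero X a d₂ g₂) z)
      =ᶠ[germFilter X a] dirD v f + dirD v g := by
    filter_upwards [dirD_congr_germ X a v he₁, dirD_congr_germ X a v he₂] with z h1 h2
    simp [Pi.add_apply, h1, h2]
  exact ((dirD_congr_germ X a v hsum).trans h2).trans h3

lemma dirD_coe_smul {X : Finset (Fin n → ℝ)} {a v : Fin n → ℂ} (c : ℂ)
    {f : (Fin n → ℂ) → ℂ}
    (hf : (f : Filter.Germ (germFilter X a) ℂ) ∈ Ma X a) :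
    ((dirD v (c • f) : (Fin n → ℂ) → ℂ) : Filter.Germ (germFilter X a) ℂ)
      = c • (dirD v f : Filter.Germ (germFilter X a) ℂ) := by
  obtain ⟨d₁, g₁, hg₁, he₁⟩ := hf
  rw [Filter.Germ.coe_eq] at he₁
  rw [← Filter.Germ.coe_smul, Filter.Germ.coe_eq]
  have hsm : (c • f) =ᶠ[germFilter X a] fun z => c * mero X a d₁ g₁ z := by
    filter_upwards [he₁] with z h1
    simp [Pi.smul_apply, h1, smul_eq_mul]
  have h2 : dirD v (fun z => c * mero X a d₁ g₁ z) =ᶠ[germFilter X a]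
      fun z => c * dirD v (mero X a d₁ g₁) z := by
    filter_upwards [eventually_Sset X a,
      nhds_eventually_germ hg₁.eventually_analyticAt] with z hz ha1
    unfold dirD
    rw [fderiv_const_mul (mero_analyticAt hz ha1).differentiableAt]
    simp
  have h3 : (fun z => c * dirD v (mero X a d₁ g₁) z) =ᶠ[germFilter X a]
      c • dirD v f := by
    filter_upwards [dirD_congr_germ X a v he₁] with z h1
    simp [Pi.smul_apply, smul_eq_mul, h1]
  exact ((dirD_congr_germ X a v hsm).trans h2).trans h3

lemma applyOp_append (u₁ u₂ : List (ℂ × List (Fin n → ℂ))) (g : (Fin n → ℂ) → ℂ)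
    (z : Fin n → ℂ) : applyOp (u₁ ++ u₂) g z = applyOp u₁ g z + applyOp u₂ g z := by
  simp [applyOp]

lemma applyOp_map_shift (c : ℂ) (v : Fin n → ℂ)
    (l : List (((Fin n → ℂ) → ℂ) × List (Fin n → ℂ))) (g : (Fin n → ℂ) → ℂ)
    (a : Fin n → ℂ) :
    applyOp (l.map fun q => (c * q.1 a, q.2 ++ [v])) g a
      = c * opFun l (dirD v g) a := by
  induction l with
  | nil => simp [applyOp, opFun]
  | cons q l ih =>
    have hL : applyOp ((q :: l).map fun q => (c * q.1 a, q.2 ++ [v])) g a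
        = c * q.1 a * applyWord (q.2 ++ [v]) g a
          + applyOp (l.map fun q => (c * q.1 a, q.2 ++ [v])) g a := by
      simp [applyOp]
    have hR : opFun (q :: l) (dirD v g) a
        = q.1 a * applyWord q.2 (dirD v g) a + opFun l (dirD v g) a := by
      simp [opFun]
    rw [hL, hR, ih, applyWord_append]
    ring

lemma applyOp_map_neg (c : ℂ)
    (l : List (((Fin n → ℂ) → ℂ) × List (Fin n → ℂ))) (g : (Fin n → ℂ) → ℂ)
    (a : Fin n → ℂ) :
    applyOp (l.map fun q => (-c * q.1 a, q.2)) g a = -(c * opFun l g a) := by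
  induction l with
  | nil => simp [applyOp, opFun]
  | cons q l ih =>
    have hL : applyOp ((q :: l).map fun q => (-c * q.1 a, q.2)) g a
        = -c * q.1 a * applyWord q.2 g a
          + applyOp (l.map fun q => (-c * q.1 a, q.2)) g a := by
      simp [applyOp]
    have hR : opFun (q :: l) g a = q.1 a * applyWord q.2 g a + opFun l g a := by
      simp [opFun]
    rw [hL, hR, ih]
    ring

end Aux

/-- For `v ∈ V`, the directional derivative `∂_v` maps `M(a, X)` into itself, and its
transpose maps `X`-Laurent functionals at `a` to `X`-Laurent functionals at `a`:
for every Laurent functional `L` at `a`, the functional `φ ↦ L(∂_v φ)` is again a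
Laurent functional at `a`. -/
theorem derivative_preserves_laurent_functionals
    (X : Finset (Fin n → ℝ)) (hX : ∀ ξ ∈ X, ξ ≠ 0) (a : Fin n → ℂ)
    (v : Fin n → ℝ) :
    (∀ f : (Fin n → ℂ) → ℂ, (f : Filter.Germ (germFilter X a) ℂ) ∈ Ma X a →
      (dirD (cOf v) f : Filter.Germ (germFilter X a) ℂ) ∈ Ma X a) ∧
    (∀ L : Filter.Germ (germFilter X a) ℂ → ℂ, IsLaurentAt X a L →
      ∃ L' : Filter.Germ (germFilter X a) ℂ → ℂ, IsLaurentAt X a L' ∧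
        ∀ f : (Fin n → ℂ) → ℂ, (f : Filter.Germ (germFilter X a) ℂ) ∈ Ma X a →
          L' (f : Filter.Germ (germFilter X a) ℂ)
            = L (dirD (cOf v) f : Filter.Germ (germFilter X a) ℂ)) := by
  constructor
  · intro f hf
    exact mem_Ma_dirD hf
  · intro L hL
    obtain ⟨hAdd, hSmul, hU⟩ := hL
    refine ⟨fun φ => L (Dmap X a (cOf v) φ), ⟨?_, ?_, ?_⟩, ?_⟩
    · -- additivity of L'
      rintro φ ψ hφ hψ
      obtain ⟨d₁, g₁, hg₁, rfl⟩ := hφ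
      obtain ⟨d₂, g₂, hg₂, rfl⟩ := hψ
      have m₁ : ((mero X a d₁ g₁ : (Fin n → ℂ) → ℂ) :
          Filter.Germ (germFilter X a) ℂ) ∈ Ma X a := ⟨d₁, g₁, hg₁, rfl⟩
      have m₂ : ((mero X a d₂ g₂ : (Fin n → ℂ) → ℂ) :
          Filter.Germ (germFilter X a) ℂ) ∈ Ma X a := ⟨d₂, g₂, hg₂, rfl⟩
      have msum : ((mero X a d₁ g₁ + mero X a d₂ g₂ : (Fin n → ℂ) → ℂ) :
          Filter.Germ (germFilter X a) ℂ) ∈ Ma X a := by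
        rw [Filter.Germ.coe_add]
        exact Ma_add m₁ m₂
      beta_reduce
      rw [← Filter.Germ.coe_add, Dmap_spec msum, Dmap_spec m₁, Dmap_spec m₂,
        dirD_coe_add m₁ m₂]
      exact hAdd _ _ (mem_Ma_dirD m₁) (mem_Ma_dirD m₂)
    · -- homogeneity of L'
      rintro c φ hφ
      obtain ⟨d₁, g₁, hg₁, rfl⟩ := hφ
      have m₁ : ((mero X a d₁ g₁ : (Fin n → ℂ) → ℂ) :
          Filter.Germ (germFilter X a) ℂ) ∈ Ma X a := ⟨d₁, g₁, hg₁, rfl⟩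
      have msm : ((c • mero X a d₁ g₁ : (Fin n → ℂ) → ℂ) :
          Filter.Germ (germFilter X a) ℂ) ∈ Ma X a := by
        rw [Filter.Germ.coe_smul]
        exact Ma_smul c m₁
      beta_reduce
      rw [← Filter.Germ.coe_smul, Dmap_spec msm, Dmap_spec m₁, dirD_coe_smul c m₁]
      exact hSmul c _ (mem_Ma_dirD m₁)
    · -- the local expression by differential operators
      intro d
      have hπa : AnalyticAt ℂ (piPoly X a d) a := analyticAt_piPoly X a d a
      have hπva : AnalyticAt ℂ (dirD (cOf v) (piPoly X a d)) a := analyticAt_dirD hπa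
      obtain ⟨u, hu⟩ := hU (fun ξ => 2 * d ξ)
      refine ⟨u.flatMap (fun p =>
        ((leibniz_word a p.2 (piPoly X a d) hπa).choose.map
          fun q => (p.1 * q.1 a, q.2 ++ [cOf v])) ++
        ((leibniz_word a p.2 (dirD (cOf v) (piPoly X a d)) hπva).choose.map
          fun q => (-p.1 * q.1 a, q.2))), ?_⟩
      intro g hg
      set hG : (Fin n → ℂ) → ℂ :=
        fun z => piPoly X a d z * dirD (cOf v) g z
          - dirD (cOf v) (piPoly X a d) z * g z with hGdef
      have hGa : AnalyticAt ℂ hG a := by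
        rw [hGdef]
        exact (hπa.mul (analyticAt_dirD hg)).sub (hπva.mul hg)
      have hmem : ((mero X a d g : (Fin n → ℂ) → ℂ) :
          Filter.Germ (germFilter X a) ℂ) ∈ Ma X a := ⟨d, g, hg, rfl⟩
      have hgerm : ((dirD (cOf v) (mero X a d g) : (Fin n → ℂ) → ℂ) :
          Filter.Germ (germFilter X a) ℂ)
          = ((mero X a (fun ξ => 2 * d ξ) hG : (Fin n → ℂ) → ℂ) :
            Filter.Germ (germFilter X a) ℂ) := by
        rw [Filter.Germ.coe_eq, hGdef]
        exact dirD_mero X a (cOf v) d hg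
      have hpair : ∀ p : ℂ × List (Fin n → ℂ),
          applyOp (((leibniz_word a p.2 (piPoly X a d) hπa).choose.map
              fun q => (p.1 * q.1 a, q.2 ++ [cOf v])) ++
            ((leibniz_word a p.2 (dirD (cOf v) (piPoly X a d)) hπva).choose.map
              fun q => (-p.1 * q.1 a, q.2))) g a
          = p.1 * applyWord p.2 hG a := by
        rintro ⟨c, w⟩
        have spec₁ := (leibniz_word a w (piPoly X a d) hπa).choose_spec
        have spec₂ := (leibniz_word a w (dirD (cOf v) (piPoly X a d)) hπva).choose_spec
        have hGsplit : hG = fun z => (piPoly X a d z * dirD (cOf v) g z)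
            + -(dirD (cOf v) (piPoly X a d) z * g z) := by
          rw [hGdef]; funext z; ring
        have e1 : applyWord w hG a
            = applyWord w (fun z => piPoly X a d z * dirD (cOf v) g z) a
              + applyWord w (fun z => -(dirD (cOf v) (piPoly X a d) z * g z)) a := by
          rw [hGsplit]
          exact (applyWord_add w (hπa.mul (analyticAt_dirD hg))
            ((hπva.mul hg).neg)).eq_of_nhds
        have e2 : applyWord w (fun z => -(dirD (cOf v) (piPoly X a d) z * g z))
            = fun z => -applyWord w
                (fun z => dirD (cOf v) (piPoly X a d) z * g z) z :=
          applyWord_neg w _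
        have e3 : applyWord w (fun z => piPoly X a d z * dirD (cOf v) g z) a
            = opFun (leibniz_word a w (piPoly X a d) hπa).choose (dirD (cOf v) g) a :=
          (spec₁.2 (dirD (cOf v) g) (analyticAt_dirD hg)).eq_of_nhds
        have e4 : applyWord w (fun z => dirD (cOf v) (piPoly X a d) z * g z) a
            = opFun (leibniz_word a w (dirD (cOf v) (piPoly X a d)) hπva).choose g a :=
          (spec₂.2 g hg).eq_of_nhds
        rw [applyOp_append, applyOp_map_shift, applyOp_map_neg, e1, e3,
          congrFun e2 a, e4]
        ring
      have hflat : ∀ lst : List (ℂ × List (Fin n → ℂ)),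
          applyOp lst hG a = applyOp (lst.flatMap (fun p =>
            ((leibniz_word a p.2 (piPoly X a d) hπa).choose.map
              fun q => (p.1 * q.1 a, q.2 ++ [cOf v])) ++
            ((leibniz_word a p.2 (dirD (cOf v) (piPoly X a d)) hπva).choose.map
              fun q => (-p.1 * q.1 a, q.2)))) g a := by
        intro lst
        induction lst with
        | nil => simp [applyOp]
        | cons p lst ih =>
          rw [List.flatMap_cons, applyOp_append]
          have hcons : applyOp (p :: lst) hG a
              = p.1 * applyWord p.2 hG a + applyOp lst hG a := by
            simp [applyOp]
          rw [hcons, ih, hpair p]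
      show L (Dmap X a (cOf v) ((mero X a d g : (Fin n → ℂ) → ℂ) :
        Filter.Germ (germFilter X a) ℂ)) = _
      rw [Dmap_spec hmem, hgerm, hu hG hGa, hflat u]
    · intro f hf
      exact congrArg L (Dmap_spec hf)

end LaurentFunctionals
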